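/- Assume k ∣ q−1 and gcd(k+1, q) = 1, let δ be an integer with 1 ≤ δ ≤ q²−1, and let β = (0, γ^δ·α_1, …, γ^δ·α_k) ∈ F_{q²}^{k+1} (so n = k+1). If 2ℓ < k, or if k = 2ℓ and (k : F_{q²})·γ^{δ(k−ℓ+ℓq)} + Σ_{i=1}^{ℓ} a_{1i}^{1+q} ≠ 0 in F_{q²}, then the GRL code GRL_k(β, A) is Hermitian LCD. -/
import Mathlib


open Matrix BigOperators Finset

/-- Hermitian dual (with respect to `x ↦ x ^ q`) of a code `C ⊆ F^ι`. -/
def dualH {F : Type} [Field F] (q : ℕ) {ι : Type} [Fintype ι] (C : Submodule F (ι → F)) :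
    Submodule F (ι → F) where
  carrier := {x | ∀ y ∈ C, ∑ i, x i * y i ^ q = 0}
  add_mem' := by
    intro a b ha hb y hy
    have h : ∑ i, (a + b) i * y i ^ q = (∑ i, a i * y i ^ q) + ∑ i, b i * y i ^ q := by
      rw [← Finset.sum_add_distrib]
      exact Finset.sum_congr rfl fun i _ => add_mul _ _ _
    rw [h, ha y hy, hb y hy, add_zero]
  zero_mem' := by intro y hy; simp
  smul_mem' := by
    intro c a ha y hy
    have h : ∑ i, (c • a) i * y i ^ q = c * ∑ i, a i * y i ^ q := by
      rw [Finset.mul_sum]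
      exact Finset.sum_congr rfl fun i _ => by
        simp [Pi.smul_apply, smul_eq_mul, mul_assoc]
    rw [h, ha y hy, mul_zero]

/-- Generator matrix of the generalized Roth–Lempel code: evaluation columns indexed by `ι`
(entry `β j ^ r`), extra columns indexed by `Fin ℓ` (zero for rows `r < k - ℓ`, and the
corresponding row of `A` for rows `k - ℓ ≤ r ≤ k - 1`). -/
def GRLmatrix {F : Type} [Field F] (k ℓ : ℕ) (hℓk : ℓ ≤ k) {ι : Type} (β : ι → F)
    (A : Matrix (Fin ℓ) (Fin ℓ) F) : Matrix (Fin k) (ι ⊕ Fin ℓ) F :=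
  fun r => Sum.elim (fun j => β j ^ (r : ℕ))
    (fun j' => if _h : (r : ℕ) < k - ℓ then 0
      else A ⟨(r : ℕ) - (k - ℓ), by have := r.isLt; omega⟩ j')

/-- The generalized Roth–Lempel code: the row span of `GRLmatrix`. -/
def GRLcode {F : Type} [Field F] (k ℓ : ℕ) (hℓk : ℓ ≤ k) {ι : Type} (β : ι → F)
    (A : Matrix (Fin ℓ) (Fin ℓ) F) : Submodule F ((ι ⊕ Fin ℓ) → F) :=
  Submodule.span F (Set.range (GRLmatrix k ℓ hℓk β A))


lemma rootSum {F : Type} [Field F] (k : ℕ) (hk : 0 < k) (ζ : F) (hord : orderOf ζ = k) (t : ℕ) :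
    ∑ i : Fin k, ζ ^ (((i : ℕ) + 1) * t) = if k ∣ t then (k : F) else 0 := by
  have hζk : ζ ^ k = 1 := by rw [← hord]; exact pow_orderOf_eq_one ζ
  by_cases h : k ∣ t
  · rw [if_pos h]
    have h1 : ∀ i : Fin k, ζ ^ (((i : ℕ) + 1) * t) = 1 := by
      intro i
      obtain ⟨u, rfl⟩ := h
      rw [show ((i : ℕ) + 1) * (k * u) = k * (((i : ℕ) + 1) * u) by ring, pow_mul, hζk, one_pow]
    rw [Finset.sum_congr rfl (fun i _ => h1 i), Finset.sum_const, card_univ, Fintype.card_fin]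
    simp
  · rw [if_neg h]
    have hx1 : ζ ^ t ≠ 1 := by
      intro h1
      exact h (hord ▸ orderOf_dvd_of_pow_eq_one h1)
    have hgeom : (∑ i ∈ Finset.range k, (ζ ^ t) ^ i) = 0 := by
      have hg := geom_sum_mul (ζ ^ t) k
      rw [← pow_mul, mul_comm t k, pow_mul, hζk, one_pow, sub_self] at hg
      rcases mul_eq_zero.mp hg with h' | h'
      · exact h'
      · exact absurd (sub_eq_zero.mp h') hx1
    calc ∑ i : Fin k, ζ ^ (((i : ℕ) + 1) * t)
        = ∑ i ∈ Finset.range k, ζ ^ t * (ζ ^ t) ^ i := by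
          rw [← Fin.sum_univ_eq_sum_range]
          refine Finset.sum_congr rfl fun i _ => ?_
          rw [show ((i : ℕ) + 1) * t = t * ((i : ℕ) + 1) by ring, pow_mul, pow_succ']
      _ = 0 := by rw [← Finset.mul_sum, hgeom, mul_zero]

lemma divKey (k q s r : ℕ) (hk : 0 < k) (hkq : k ∣ q - 1) (hq : 1 ≤ q) (hs : s < k) (hr : r < k) :
    k ∣ s + r * q ↔ (s = 0 ∧ r = 0) ∨ s + r = k := by
  have hq1 : 1 ≡ q [MOD k] := (Nat.modEq_iff_dvd' hq).mpr hkq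
  have hmod : s + r ≡ s + r * q [MOD k] := by
    have h2 := (Nat.ModEq.refl s).add ((Nat.ModEq.refl r).mul hq1)
    rwa [mul_one] at h2
  have hiff : k ∣ s + r * q ↔ k ∣ s + r := by
    constructor
    · intro hd
      exact (Nat.modEq_zero_iff_dvd).mp ((hmod.trans ((Nat.modEq_zero_iff_dvd).mpr hd)))
    · intro hd
      exact (Nat.modEq_zero_iff_dvd).mp ((hmod.symm.trans ((Nat.modEq_zero_iff_dvd).mpr hd)))
  rw [hiff]
  constructor
  · rintro ⟨d, hd⟩
    match d, hd with
    | 0, hd => left; omega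
    | 1, hd => right; omega
    | (n+2), hd =>
      exfalso
      have h2 : k * (n + 2) = k * n + k + k := by ring
      omega
  · rintro (⟨h1, h2⟩ | h1)
    · simp [h1, h2]
    · exact h1 ▸ dvd_refl k

lemma entryFormula {F : Type} [Field F] (q k ℓ : ℕ) (hℓk : ℓ ≤ k) (hq1 : 1 ≤ q) (hk0 : 0 < k)
    (hkq : k ∣ q - 1) (g : F) (N δ : ℕ) (hord : orderOf (g ^ N) = k)
    (β : Fin (k + 1) → F) (hβ : β = Fin.cons 0 (fun i : Fin k => g ^ δ * g ^ (N * ((i : ℕ) + 1))))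
    (A : Matrix (Fin ℓ) (Fin ℓ) F) (s r : Fin k) :
    ∑ i, GRLmatrix k ℓ hℓk β A s i * (GRLmatrix k ℓ hℓk β A r i) ^ q =
      (if (s : ℕ) = 0 ∧ (r : ℕ) = 0 then (k : F) + 1
       else if (s : ℕ) + (r : ℕ) = k then (k : F) * g ^ (δ * ((s : ℕ) + (r : ℕ) * q))
       else 0)
      + ∑ j : Fin ℓ,
          GRLmatrix k ℓ hℓk β A s (Sum.inr j) * (GRLmatrix k ℓ hℓk β A r (Sum.inr j)) ^ q := by
  rw [Fintype.sum_sum_type]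
  congr 1
  have hterm : ∀ j : Fin (k + 1),
      GRLmatrix k ℓ hℓk β A s (Sum.inl j) * (GRLmatrix k ℓ hℓk β A r (Sum.inl j)) ^ q =
      β j ^ ((s : ℕ) + (r : ℕ) * q) := by
    intro j
    show β j ^ (s : ℕ) * (β j ^ (r : ℕ)) ^ q = _
    rw [← pow_mul, ← pow_add]
  rw [Finset.sum_congr rfl fun j _ => hterm j]
  set t := (s : ℕ) + (r : ℕ) * q with ht
  rw [hβ, Fin.sum_univ_succ]
  simp only [Fin.cons_zero, Fin.cons_succ]
  have hsum : ∑ i : Fin k, (g ^ δ * g ^ (N * ((i : ℕ) + 1))) ^ t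
      = g ^ (δ * t) * (if k ∣ t then (k : F) else 0) := by
    rw [← rootSum k hk0 (g ^ N) hord t, Finset.mul_sum]
    refine Finset.sum_congr rfl fun i _ => ?_
    rw [mul_pow, ← pow_mul, ← pow_mul, ← pow_mul]
    congr 2
    ring
  rw [hsum]
  have hdiv := divKey k q (s : ℕ) (r : ℕ) hk0 hkq hq1 s.isLt r.isLt
  by_cases h0 : (s : ℕ) = 0 ∧ (r : ℕ) = 0
  · rw [if_pos h0]
    have ht0 : t = 0 := by rw [ht, h0.1, h0.2]; ring
    rw [ht0]
    simp [Nat.mul_zero]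
    ring
  · rw [if_neg h0]
    have ht1 : t ≠ 0 := by
      intro h
      rw [ht] at h
      have hs0 : (s : ℕ) = 0 := by omega
      have hr0 : (r : ℕ) * q = 0 := by omega
      rcases Nat.mul_eq_zero.mp hr0 with h' | h'
      · exact h0 ⟨hs0, h'⟩
      · omega
    rw [zero_pow ht1, zero_add]
    by_cases hk : (s : ℕ) + (r : ℕ) = k
    · rw [if_pos hk, if_pos (hdiv.mpr (Or.inr hk))]
      ring
    · rw [if_neg hk, if_neg ?_, mul_zero]
      intro hd
      rcases hdiv.mp hd with h' | h'
      · exact h0 h'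
      · exact hk h'

lemma kernelStep {F : Type} [Field F] (q k ℓ : ℕ) (hℓ2 : 2 ≤ ℓ) (hℓk : ℓ ≤ k)
    (h2ℓ : 2 * ℓ ≤ k)
    (g : F) (hg : g ≠ 0) (δ : ℕ)
    (hkF : (k : F) ≠ 0) (hk1F : (k : F) + 1 ≠ 0)
    (T2 : Fin k → Fin k → F)
    (hT2a : ∀ s r : Fin k, (s : ℕ) < k - ℓ → T2 s r = 0)
    (hT2b : ∀ s r : Fin k, (r : ℕ) < k - ℓ → T2 s r = 0)
    (hcase : 2 * ℓ < k ∨ (k = 2 * ℓ ∧ ∀ s r : Fin k, (s : ℕ) = ℓ → (r : ℕ) = k - ℓ →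
      (k : F) * g ^ (δ * ((k - (r : ℕ)) + (r : ℕ) * q)) + T2 s r ≠ 0))
    (c : Fin k → F)
    (hEq : ∀ r : Fin k,
      (∑ s : Fin k, c s * (if (s : ℕ) = 0 ∧ (r : ℕ) = 0 then (k : F) + 1
        else if (s : ℕ) + (r : ℕ) = k then (k : F) * g ^ (δ * ((s : ℕ) + (r : ℕ) * q))
        else 0)) + ∑ s : Fin k, c s * T2 s r = 0) :
    ∀ s, c s = 0 := by
  have hk0 : 0 < k := by omega
  have hw : ∀ e : ℕ, (k : F) * g ^ e ≠ 0 := fun e => mul_ne_zero hkF (pow_ne_zero e hg)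
  -- Step A : c 0 = 0
  have hcz : c ⟨0, hk0⟩ = 0 := by
    have h := hEq ⟨0, hk0⟩
    have hT2 : ∑ s : Fin k, c s * T2 s ⟨0, hk0⟩ = 0 :=
      Finset.sum_eq_zero fun s _ => by rw [hT2b s _ (by simp; omega), mul_zero]
    rw [hT2, add_zero] at h
    rw [Finset.sum_eq_single ⟨0, hk0⟩ ?h0 ?h1] at h
    case h0 =>
      intro s _ hs
      rw [if_neg ?_, if_neg ?_, mul_zero]
      · simp only [Fin.val_mk]
        have : (s : ℕ) ≠ 0 := fun h' => hs (Fin.ext (by simpa using h'))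
        omega
      · rintro ⟨h1, -⟩
        exact hs (Fin.ext (by simpa using h1))
    case h1 => intro h'; exact absurd (mem_univ _) h'
    rw [if_pos (by simp)] at h
    exact (mul_eq_zero.mp h).resolve_right hk1F
  -- evaluation of the first sum at a nonzero row
  have key : ∀ (rv : ℕ) (hrv : rv < k) (hrv0 : rv ≠ 0),
      c ⟨k - rv, Nat.sub_lt hk0 (Nat.pos_of_ne_zero hrv0)⟩
        * ((k : F) * g ^ (δ * ((k - rv) + rv * q)))
        + ∑ s : Fin k, c s * T2 s ⟨rv, hrv⟩ = 0 := by
    intro rv hrv hrv0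
    have h := hEq ⟨rv, hrv⟩
    rw [Finset.sum_eq_single ⟨k - rv, by omega⟩ ?h0 ?h1] at h
    case h0 =>
      intro s _ hs
      rw [if_neg ?_, if_neg ?_, mul_zero]
      · simp only [Fin.val_mk]
        intro h'
        exact hs (Fin.ext (by simp; omega))
      · rintro ⟨-, h2⟩
        simp only [Fin.val_mk] at h2
        omega
    case h1 => intro h'; exact absurd (mem_univ _) h'
    rw [if_neg (by simp; omega), if_pos (by simp; omega)] at h
    simpa using h
  -- Step B : c s = 0 for s ≥ ℓ + 1
  have hchigh : ∀ s : Fin k, ℓ + 1 ≤ (s : ℕ) → c s = 0 := by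
    intro s hs
    have hsk := s.isLt
    have h := key (k - (s : ℕ)) (by omega) (by omega)
    have hT2 : ∑ s' : Fin k, c s' * T2 s' ⟨k - (s : ℕ), by omega⟩ = 0 :=
      Finset.sum_eq_zero fun s' _ => by rw [hT2b s' _ (by simp; omega), mul_zero]
    rw [hT2, add_zero] at h
    have heq : (⟨k - (k - (s : ℕ)), by omega⟩ : Fin k) = s := Fin.ext (by simp; omega)
    rw [heq] at h
    exact (mul_eq_zero.mp h).resolve_right (hw _)
  -- Step C : c ℓ = 0
  have hcl : c ⟨ℓ, by omega⟩ = 0 := by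
    have h := key (k - ℓ) (by omega) (by omega)
    have heq : (⟨k - (k - ℓ), by omega⟩ : Fin k) = ⟨ℓ, by omega⟩ := Fin.ext (by simp; omega)
    rw [heq] at h
    rcases hcase with hlt | ⟨hk2l, hne⟩
    · have hT2 : ∑ s' : Fin k, c s' * T2 s' ⟨k - ℓ, by omega⟩ = 0 :=
        Finset.sum_eq_zero fun s' _ => by
          by_cases hs' : (s' : ℕ) < k - ℓ
          · rw [hT2a s' _ hs', mul_zero]
          · rw [hchigh s' (by omega), zero_mul]
      rw [hT2, add_zero] at h
      exact (mul_eq_zero.mp h).resolve_right (hw _)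
    · have hT2 : ∑ s' : Fin k, c s' * T2 s' ⟨k - ℓ, by omega⟩
          = c (⟨ℓ, by omega⟩ : Fin k) * T2 (⟨ℓ, by omega⟩ : Fin k) (⟨k - ℓ, by omega⟩ : Fin k) := by
        refine Finset.sum_eq_single_of_mem (⟨ℓ, by omega⟩ : Fin k) (mem_univ _) ?_
        intro s' _ hs'
        by_cases hlow : (s' : ℕ) < k - ℓ
        · rw [hT2a s' _ hlow, mul_zero]
        · have hne' : (s' : ℕ) ≠ ℓ := fun h' => hs' (Fin.ext (by simpa using h'))
          rw [hchigh s' (by omega), zero_mul]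
      rw [hT2, ← mul_add] at h
      exact (mul_eq_zero.mp h).resolve_right (hne ⟨ℓ, by omega⟩ ⟨k - ℓ, by omega⟩ rfl rfl)
  -- all s ≥ ℓ are zero
  have hge : ∀ s : Fin k, ℓ ≤ (s : ℕ) → c s = 0 := by
    intro s hs
    rcases eq_or_lt_of_le hs with h' | h'
    · have : s = ⟨ℓ, by omega⟩ := Fin.ext (by simp; omega)
      rw [this]; exact hcl
    · exact hchigh s (by omega)
  -- final
  intro s
  have hsk := s.isLt
  by_cases hs0 : (s : ℕ) = 0
  · have : s = ⟨0, hk0⟩ := Fin.ext (by simpa using hs0)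
    rw [this]; exact hcz
  · by_cases hsl : ℓ ≤ (s : ℕ)
    · exact hge s hsl
    · -- 1 ≤ s < ℓ
      have h := key (k - (s : ℕ)) (by omega) (by omega)
      have hT2 : ∑ s' : Fin k, c s' * T2 s' ⟨k - (s : ℕ), by omega⟩ = 0 :=
        Finset.sum_eq_zero fun s' _ => by
          by_cases hlow : (s' : ℕ) < k - ℓ
          · rw [hT2a s' _ hlow, mul_zero]
          · rw [hge s' (by omega), zero_mul]
      rw [hT2, add_zero] at h
      have heq : (⟨k - (k - (s : ℕ)), by omega⟩ : Fin k) = s := Fin.ext (by simp; omega)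
      rw [heq] at h
      exact (mul_eq_zero.mp h).resolve_right (hw _)

set_option maxHeartbeats 2000000 in
/-- with `k ∣ q - 1`, `gcd(k+1, q) = 1` and `β = (0, γ^δ·α_1, …, γ^δ·α_k)`,
if `2ℓ < k`, or `k = 2ℓ` and `k·γ^{δ(k-ℓ+ℓq)} + Σ a_{1i}^{1+q} ≠ 0`, the GRL code is
Hermitian LCD. -/
theorem stmt14 {F : Type} [Field F] [Fintype F]
    (q p m : ℕ) (hp : p.Prime) (hodd : Odd p) (hm : 0 < m) (hq : q = p ^ m)
    (hcard : Fintype.card F = q ^ 2)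
    (γ : Fˣ) (hγ : ∀ x : Fˣ, x ∈ Subgroup.zpowers γ)
    (k ℓ : ℕ) (hℓ2 : 2 ≤ ℓ) (hℓk : ℓ ≤ k) (hkdvd : k ∣ q ^ 2 - 1)
    (A : Matrix (Fin ℓ) (Fin ℓ) F) (hA : IsUnit A.det)
    (α : Fin k → F)
    (hα : ∀ i : Fin k, α i = (γ : F) ^ ((q ^ 2 - 1) / k * ((i : ℕ) + 1)))
    (hkq : k ∣ q - 1) (hgcd : Nat.gcd (k + 1) q = 1)
    (δ : ℕ) (hδ1 : 1 ≤ δ) (hδq : δ ≤ q ^ 2 - 1)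
    (β : Fin (k + 1) → F) (hβ : β = Fin.cons 0 (fun i => (γ : F) ^ δ * α i))
    (hcase : 2 * ℓ < k ∨
      (k = 2 * ℓ ∧ (k : F) * (γ : F) ^ (δ * (k - ℓ + ℓ * q)) +
        ∑ i : Fin ℓ, A ⟨0, by omega⟩ i ^ (1 + q) ≠ 0)) :
    GRLcode k ℓ hℓk β A ⊓ dualH q (GRLcode k ℓ hℓk β A) = ⊥ := by

  classical
  -- ## setup
  have hk0 : 0 < k := by omega
  have hq3 : 3 ≤ q := by
    have h1 : p ≤ p ^ m := Nat.le_self_pow hm.ne' p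
    have h2 : 2 ≤ p := hp.two_le
    have h3 : p ≠ 2 := by rintro rfl; exact (Nat.not_odd_iff_even.mpr even_two) hodd
    omega
  have hq9 : 9 ≤ q ^ 2 := by
    calc (9 : ℕ) = 3 ^ 2 := by norm_num
    _ ≤ q ^ 2 := Nat.pow_le_pow_left hq3 2
  have h2ℓ : 2 * ℓ ≤ k := by rcases hcase with h | ⟨h, -⟩ <;> omega
  haveI : Fact p.Prime := ⟨hp⟩
  have hpq : p ∣ q := hq ▸ dvd_pow_self p hm.ne'
  have hcharF : CharP F p := by
    have hdvd : p ∣ Fintype.card F := by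
      rw [hcard, hq, ← pow_mul]
      exact dvd_pow_self p (by omega)
    have h1 : (ringChar F).Prime := CharP.char_is_prime F (ringChar F)
    have h2 : p ∣ ringChar F := (prime_dvd_char_iff_dvd_card p).mpr hdvd
    exact ((Nat.prime_dvd_prime_iff_eq hp h1).mp h2) ▸ ringChar.charP F
  have hkF : (k : F) ≠ 0 := by
    intro h
    have h1 : p ∣ k := (CharP.cast_eq_zero_iff F p k).mp h
    have h2 : p ∣ q - 1 := h1.trans hkq
    have h3 := Nat.le_of_dvd (by omega) (Nat.dvd_sub hpq h2)
    have h4 := hp.two_le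
    omega
  have hk1F : (k : F) + 1 ≠ 0 := by
    intro h
    have h0 : ((k + 1 : ℕ) : F) = 0 := by push_cast; exact h
    have h1 : p ∣ k + 1 := (CharP.cast_eq_zero_iff F p (k + 1)).mp h0
    have h2 : p ∣ Nat.gcd (k + 1) q := Nat.dvd_gcd h1 hpq
    rw [hgcd] at h2
    have := Nat.le_of_dvd one_pos h2
    have := hp.two_le
    omega
  have hg : (γ : F) ≠ 0 := Units.ne_zero γ
  -- order of the k-th root of unity
  have hord : orderOf ((γ : F) ^ ((q ^ 2 - 1) / k)) = k := by
    have hcardU : Nat.card Fˣ = q ^ 2 - 1 := by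
      rw [Nat.card_eq_fintype_card, Fintype.card_units, hcard]
    have hordγ : orderOf γ = q ^ 2 - 1 := by
      rw [orderOf_eq_card_of_forall_mem_zpowers hγ, hcardU]
    have hNdvd : (q ^ 2 - 1) / k ∣ q ^ 2 - 1 := Nat.div_dvd_of_dvd hkdvd
    rw [show (γ : F) ^ ((q ^ 2 - 1) / k) = ((γ ^ ((q ^ 2 - 1) / k) : Fˣ) : F) from rfl,
      orderOf_units, orderOf_pow, hordγ, Nat.gcd_eq_right hNdvd,
      Nat.div_div_self hkdvd (by omega)]
  -- rewrite β in terms of powers of γ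
  have hβ' : β = Fin.cons 0
      (fun i : Fin k => (γ : F) ^ δ * (γ : F) ^ ((q ^ 2 - 1) / k * ((i : ℕ) + 1))) := by
    have hfe : (fun i : Fin k => (γ : F) ^ δ * α i)
        = fun i : Fin k => (γ : F) ^ δ * (γ : F) ^ ((q ^ 2 - 1) / k * ((i : ℕ) + 1)) :=
      funext fun i => by rw [hα i]
    rw [hβ, hfe]
  -- ## reduction to the kernel computation
  rw [eq_bot_iff]
  intro x hx
  obtain ⟨hxC, hxD⟩ := Submodule.mem_inf.mp hx
  rw [Submodule.mem_bot]
  obtain ⟨c, hc⟩ := (Submodule.mem_span_range_iff_exists_fun F).mp hxC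
  have hEq : ∀ r : Fin k, ∑ s : Fin k, c s *
      (∑ i, GRLmatrix k ℓ hℓk β A s i * (GRLmatrix k ℓ hℓk β A r i) ^ q) = 0 := by
    intro r
    have hy : ∑ i, x i * (GRLmatrix k ℓ hℓk β A r i) ^ q = 0 :=
      hxD (GRLmatrix k ℓ hℓk β A r) (Submodule.subset_span ⟨r, rfl⟩)
    calc ∑ s : Fin k, c s * (∑ i, GRLmatrix k ℓ hℓk β A s i * (GRLmatrix k ℓ hℓk β A r i) ^ q)
        = ∑ s : Fin k, ∑ i, c s * GRLmatrix k ℓ hℓk β A s i * (GRLmatrix k ℓ hℓk β A r i) ^ q := by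
          refine Finset.sum_congr rfl fun s _ => ?_
          rw [Finset.mul_sum]
          exact Finset.sum_congr rfl fun i _ => by ring
      _ = ∑ i, ∑ s : Fin k, c s * GRLmatrix k ℓ hℓk β A s i * (GRLmatrix k ℓ hℓk β A r i) ^ q :=
          Finset.sum_comm
      _ = ∑ i, x i * (GRLmatrix k ℓ hℓk β A r i) ^ q := by
          refine Finset.sum_congr rfl fun i _ => ?_
          rw [← Finset.sum_mul, ← hc]
          simp [Finset.sum_apply, Pi.smul_apply, smul_eq_mul]
      _ = 0 := hy
  -- the extra-column pairing
  set T2 : Fin k → Fin k → F := fun s r => ∑ j : Fin ℓ,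
    GRLmatrix k ℓ hℓk β A s (Sum.inr j) * (GRLmatrix k ℓ hℓk β A r (Sum.inr j)) ^ q with hT2def
  have hT2a : ∀ s r : Fin k, (s : ℕ) < k - ℓ → T2 s r = 0 := by
    intro s r hs
    refine Finset.sum_eq_zero fun j _ => ?_
    show (GRLmatrix k ℓ hℓk β A s (Sum.inr j)) * _ = 0
    simp only [GRLmatrix, Sum.elim_inr]
    rw [dif_pos hs, zero_mul]
  have hT2b : ∀ s r : Fin k, (r : ℕ) < k - ℓ → T2 s r = 0 := by
    intro s r hr
    refine Finset.sum_eq_zero fun j _ => ?_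
    show _ * (GRLmatrix k ℓ hℓk β A r (Sum.inr j)) ^ q = 0
    simp only [GRLmatrix, Sum.elim_inr]
    rw [dif_pos hr, zero_pow (by omega), mul_zero]
  have hEq2 : ∀ r : Fin k,
      (∑ s : Fin k, c s * (if (s : ℕ) = 0 ∧ (r : ℕ) = 0 then (k : F) + 1
        else if (s : ℕ) + (r : ℕ) = k then (k : F) * (γ : F) ^ (δ * ((s : ℕ) + (r : ℕ) * q))
        else 0)) + ∑ s : Fin k, c s * T2 s r = 0 := by
    intro r
    have h := hEq r
    have hsplit : ∑ s : Fin k, c s *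
        (∑ i, GRLmatrix k ℓ hℓk β A s i * (GRLmatrix k ℓ hℓk β A r i) ^ q)
        = ∑ s : Fin k, (c s * (if (s : ℕ) = 0 ∧ (r : ℕ) = 0 then (k : F) + 1
            else if (s : ℕ) + (r : ℕ) = k then (k : F) * (γ : F) ^ (δ * ((s : ℕ) + (r : ℕ) * q))
            else 0) + c s * T2 s r) := by
      refine Finset.sum_congr rfl fun s _ => ?_
      rw [entryFormula q k ℓ hℓk (by omega) hk0 hkq (γ : F) ((q ^ 2 - 1) / k) δ hord β hβ' A s r,
        mul_add]
    rw [hsplit, Finset.sum_add_distrib] at h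
    exact h
  -- the case hypothesis, in the form needed by `kernelStep`
  have hcase' : 2 * ℓ < k ∨ (k = 2 * ℓ ∧ ∀ s r : Fin k, (s : ℕ) = ℓ → (r : ℕ) = k - ℓ →
      (k : F) * (γ : F) ^ (δ * ((k - (r : ℕ)) + (r : ℕ) * q)) + T2 s r ≠ 0) := by
    rcases hcase with h | ⟨hk2l, hne⟩
    · exact Or.inl h
    · refine Or.inr ⟨hk2l, fun s r hs hr => ?_⟩
      have hT2val : T2 s r = ∑ i : Fin ℓ, A ⟨0, by omega⟩ i ^ (1 + q) := by
        refine Finset.sum_congr rfl fun j _ => ?_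
        show (GRLmatrix k ℓ hℓk β A s (Sum.inr j)) * (GRLmatrix k ℓ hℓk β A r (Sum.inr j)) ^ q = _
        simp only [GRLmatrix, Sum.elim_inr]
        rw [dif_neg (by omega), dif_neg (by omega)]
        have e1 : (⟨(s : ℕ) - (k - ℓ), by have := s.isLt; omega⟩ : Fin ℓ) = ⟨0, by omega⟩ :=
          Fin.ext (by simp; omega)
        have e2 : (⟨(r : ℕ) - (k - ℓ), by have := r.isLt; omega⟩ : Fin ℓ) = ⟨0, by omega⟩ :=
          Fin.ext (by simp; omega)
        rw [e1, e2, pow_add, pow_one]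
      have hexp : δ * ((k - (r : ℕ)) + (r : ℕ) * q) = δ * (k - ℓ + ℓ * q) := by
        rw [hr]
        have e1 : k - (k - ℓ) = k - ℓ := by omega
        have e2 : (k - ℓ) * q = ℓ * q := by rw [show k - ℓ = ℓ from by omega]
        rw [e1, e2]
      rw [hT2val, hexp]
      exact hne
  -- conclude
  have hc0 := kernelStep q k ℓ hℓ2 hℓk h2ℓ (γ : F) hg δ hkF hk1F T2 hT2a hT2b hcase' c hEq2
  rw [← hc]
  simp [hc0]
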